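/- (Initial pressure) For every u₀ ∈ V there exists q ∈ Q such that B(q, ξ) = ⟨u₀, ξ⟩ for all ξ ∈ V_⊥; any two such solutions q, q' are equivalent (q ∼ q'); and every solution q satisfies sup over ξ ∈ V_⊥ with ξ ≠ 0 of B(q, ξ)/‖ξ‖ equals ‖Π_⊥ u₀‖ (with the convention that the supremum over the empty set is 0). -/

import Mathlib

open scoped RealInnerProductSpace

/-- The discretely divergence-free subspace
`V_div := {v ∈ V : B(q, v) = 0 for all q ∈ Q}`. -/
def Vdiv {Q V : Type*} [AddCommGroup Q] [Module ℝ Q]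
    [NormedAddCommGroup V] [InnerProductSpace ℝ V]
    (B : Q →ₗ[ℝ] V →ₗ[ℝ] ℝ) : Submodule ℝ V where
  carrier := {v | ∀ q : Q, B q v = 0}
  add_mem' := by
    intro a b ha hb q
    simp [map_add, ha q, hb q]
  zero_mem' := by
    intro q
    simp
  smul_mem' := by
    intro c v hv q
    simp [map_smul, hv q]

/-- Riesz representative of `B q`. -/
noncomputable def rieszB {Q V : Type*} [AddCommGroup Q] [Module ℝ Q]
    [NormedAddCommGroup V] [InnerProductSpace ℝ V] [FiniteDimensional ℝ V]
    (B : Q →ₗ[ℝ] V →ₗ[ℝ] ℝ) : Q →ₗ[ℝ] V where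
  toFun q := (InnerProductSpace.toDual ℝ V).symm ((B q).toContinuousLinearMap)
  map_add' a b := by simp
  map_smul' c x := by simp

lemma inner_rieszB {Q V : Type*} [AddCommGroup Q] [Module ℝ Q]
    [NormedAddCommGroup V] [InnerProductSpace ℝ V] [FiniteDimensional ℝ V]
    (B : Q →ₗ[ℝ] V →ₗ[ℝ] ℝ) (q : Q) (v : V) : ⟪rieszB B q, v⟫ = B q v := by
  simp [rieszB, InnerProductSpace.toDual_symm_apply]

/-- Initial pressure: for every `u₀ ∈ V` there exists `q ∈ Q` with `B(q, ξ) = ⟪u₀, ξ⟫`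
for all `ξ ∈ V_⊥ = (V_div)ᗮ`; any two solutions are equivalent (`q ∼ q'`, i.e.
`B(q − q', ·)` vanishes on `V_⊥`); and every solution satisfies
`sup_{ξ ∈ V_⊥, ξ ≠ 0} B(q, ξ)/‖ξ‖ = ‖Π_⊥ u₀‖` (supremum of the empty set being `0`). -/
theorem initial_pressure {Q V : Type*} [AddCommGroup Q] [Module ℝ Q]
    [NormedAddCommGroup V] [InnerProductSpace ℝ V] [FiniteDimensional ℝ V]
    (B : Q →ₗ[ℝ] V →ₗ[ℝ] ℝ) (u₀ : V) :
    (∃ q : Q, ∀ ξ ∈ (Vdiv B)ᗮ, B q ξ = ⟪u₀, ξ⟫)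
      ∧ (∀ q q' : Q, (∀ ξ ∈ (Vdiv B)ᗮ, B q ξ = ⟪u₀, ξ⟫) →
          (∀ ξ ∈ (Vdiv B)ᗮ, B q' ξ = ⟪u₀, ξ⟫) →
          ∀ v ∈ (Vdiv B)ᗮ, B (q - q') v = 0)
      ∧ (∀ q : Q, (∀ ξ ∈ (Vdiv B)ᗮ, B q ξ = ⟪u₀, ξ⟫) →
          sSup {r : ℝ | ∃ ξ ∈ (Vdiv B)ᗮ, ξ ≠ 0 ∧ r = B q ξ / ‖ξ‖}
            = ‖(Submodule.orthogonalProjectionOnto (Vdiv B)ᗮ u₀ : V)‖) := by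
  set W : Submodule ℝ V := (Vdiv B)ᗮ with hWdef
  -- The orthogonal projection onto `W` is inner-preserving against elements of `W`.
  have hproj : ∀ x : V, ∀ v ∈ W, ⟪(Submodule.orthogonalProjectionOnto W x : V), v⟫ = ⟪x, v⟫ := by
    intro x v hv
    rw [Submodule.coe_orthogonalProjectionOnto_apply, Submodule.inner_starProjection_left_eq_right]
    congr 1
    exact (Submodule.starProjection_eq_self_iff.mpr hv)
  -- Composite map `q ↦ Π_W (riesz (B q))`.
  set g : Q →ₗ[ℝ] V :=
    W.subtype.comp ((Submodule.orthogonalProjectionOnto W).toLinearMap.comp (rieszB B)) with hgdef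
  have hg : ∀ q : Q, g q = (Submodule.orthogonalProjectionOnto W (rieszB B q) : V) := fun q => rfl
  have hgW : ∀ q : Q, g q ∈ W := fun q => (Submodule.orthogonalProjectionOnto W (rieszB B q)).2
  have hBg : ∀ q : Q, ∀ v ∈ W, ⟪g q, v⟫ = B q v := by
    intro q v hv
    rw [hg, hproj _ v hv, inner_rieszB]
  set S : Submodule ℝ V := LinearMap.range g with hSdef
  have hSW : S ≤ W := by
    rintro _ ⟨q, rfl⟩; exact hgW q
  have horth : Sᗮ ⊓ W = ⊥ := by
    rw [Submodule.eq_bot_iff]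
    rintro v ⟨hv1, hv2⟩
    have hvdiv : v ∈ Vdiv B := by
      intro q
      rw [← hBg q v hv2]
      exact hv1 (g q) ⟨q, rfl⟩
    have := hv2 v hvdiv
    simpa [inner_self_eq_zero] using this
  have hWS : W = S := by
    have := Submodule.sup_orthogonal_inf_of_hasOrthogonalProjection hSW
    rw [horth] at this
    simpa using this.symm
  -- existence
  have hex : ∃ q : Q, ∀ ξ ∈ W, B q ξ = ⟪u₀, ξ⟫ := by
    have hmem : (Submodule.orthogonalProjectionOnto W u₀ : V) ∈ S := by
      rw [← hWS]; exact (Submodule.orthogonalProjectionOnto W u₀).2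
    obtain ⟨q, hq⟩ := hmem
    refine ⟨q, fun ξ hξ => ?_⟩
    rw [← hBg q ξ hξ, hq, hproj _ ξ hξ]
  refine ⟨hex, ?_, ?_⟩
  · intro q q' h h' v hv
    simp [map_sub, h v hv, h' v hv]
  · intro q hq
    set p : V := (Submodule.orthogonalProjectionOnto W u₀ : V) with hpdef
    have hpW : p ∈ W := (Submodule.orthogonalProjectionOnto W u₀).2
    have hBq : ∀ ξ ∈ W, B q ξ = ⟪p, ξ⟫ := by
      intro ξ hξ
      rw [hq ξ hξ, ← hproj u₀ ξ hξ]
    set T : Set ℝ := {r : ℝ | ∃ ξ ∈ W, ξ ≠ 0 ∧ r = B q ξ / ‖ξ‖} with hTdef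
    by_cases hW : W = ⊥
    · have hT : T = ∅ := by
        ext r
        simp only [hTdef, Set.mem_setOf_eq, Set.mem_empty_iff_false, iff_false]
        rintro ⟨ξ, hξ, hξ0, -⟩
        rw [hW, Submodule.mem_bot] at hξ
        exact hξ0 hξ
      have hp0 : p = 0 := by
        have := hpW; rw [hW, Submodule.mem_bot] at this; exact this
      rw [hT, Real.sSup_empty, hp0, norm_zero]
    · obtain ⟨w, hwW, hw0⟩ := Submodule.exists_mem_ne_zero_of_ne_bot hW
      have hub : ∀ r ∈ T, r ≤ ‖p‖ := by
        rintro r ⟨ξ, hξ, hξ0, rfl⟩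
        rw [hBq ξ hξ]
        rw [div_le_iff₀ (norm_pos_iff.mpr hξ0)]
        exact real_inner_le_norm p ξ
      have hne : T.Nonempty := ⟨B q w / ‖w‖, w, hwW, hw0, rfl⟩
      have hbdd : BddAbove T := ⟨‖p‖, hub⟩
      refine le_antisymm (csSup_le hne hub) ?_
      by_cases hp0 : p = 0
      · have h0 : (0 : ℝ) ∈ T := by
          refine ⟨w, hwW, hw0, ?_⟩
          rw [hBq w hwW, hp0, inner_zero_left, zero_div]
        rw [hp0, norm_zero]
        exact le_csSup hbdd h0
      · have hmem : ‖p‖ ∈ T := by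
          refine ⟨p, hpW, hp0, ?_⟩
          rw [hBq p hpW, real_inner_self_eq_norm_mul_norm]
          field_simp
        exact le_csSup hbdd hmem
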